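/- Fix a ≥ 0 and L ≥ 1 and consider |χ_{a,L}⟩ = ∑_{i₁+…+i_L = a, 0 ≤ i_k ≤ a} |i₁,…,i_L⟩ ∈ (ℂ^{a+1})^{⊗L}. Then |χ_{a,L}⟩ = (1/a!) · lim_{ε→0} ε^{-a} ∑_{j=0}^{a} (-1)^{a-j} C(a,j) |φ(jε)⟩^{⊗L}, where |φ(ε)⟩ = ∑_{i=0}^{a} ε^i |i⟩. -/

import Mathlib

open Filter
open Filter Finset

noncomputable def Dsum (a s : ℕ) : ℂ :=
  ∑ j ∈ Finset.range (a + 1), (-1 : ℂ) ^ (a - j) * (a.choose j) * (j : ℂ) ^ s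

lemma Dsum_zero_right (a : ℕ) : Dsum a 0 = (0 : ℂ) ^ a := by
  have h := add_pow (1 : ℂ) (-1) a
  simp only [add_neg_cancel, one_pow, one_mul] at h
  rw [Dsum]
  rw [h]
  refine Finset.sum_congr rfl fun j hj => by ring

lemma Dsum_rec (a s : ℕ) (hs : 1 ≤ s) :
    Dsum (a + 1) s = ∑ t ∈ Finset.range s, (s.choose t : ℂ) * Dsum a t := by
  have h0s : (0 : ℂ) ^ s = 0 := by
    exact zero_pow (by omega)
  have hsplit : Dsum (a + 1) s =
      (∑ j ∈ range (a + 2), (-1 : ℂ) ^ (a + 1 - j) * (a.choose j) * (j : ℂ) ^ s) +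
      (∑ j ∈ range (a + 2), (-1 : ℂ) ^ (a + 1 - j) * (a.choose (j - 1)) * (j : ℂ) ^ s) := by
    rw [Dsum, ← Finset.sum_add_distrib]
    refine Finset.sum_congr rfl fun j _ => ?_
    match j with
    | 0 => simp [h0s]
    | Nat.succ k =>
      rw [Nat.choose_succ_succ]
      push_cast
      ring_nf
  have hA : (∑ j ∈ range (a + 2), (-1 : ℂ) ^ (a + 1 - j) * (a.choose j) * (j : ℂ) ^ s)
      = -Dsum a s := by
    rw [Finset.sum_range_succ, Nat.choose_succ_self]
    simp only [Nat.cast_zero, mul_zero, zero_mul, add_zero]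
    rw [Dsum, ← Finset.sum_neg_distrib]
    refine Finset.sum_congr rfl fun j hj => ?_
    have hj' : j ≤ a := by simpa using Nat.lt_succ_iff.mp (Finset.mem_range.mp hj)
    rw [show a + 1 - j = (a - j) + 1 by omega, pow_succ]
    ring
  have hB : (∑ j ∈ range (a + 2), (-1 : ℂ) ^ (a + 1 - j) * (a.choose (j - 1)) * (j : ℂ) ^ s)
      = ∑ t ∈ range (s + 1), (s.choose t : ℂ) * Dsum a t := by
    rw [Finset.sum_range_succ']
    simp only [Nat.add_sub_cancel, Nat.zero_sub, Nat.choose_zero_right, Nat.cast_zero, h0s,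
      mul_zero, add_zero]
    have hexp : ∀ j : ℕ, ((j : ℂ) + 1) ^ s = ∑ t ∈ range (s + 1), (j : ℂ) ^ t * (s.choose t) := by
      intro j
      rw [add_pow]
      refine Finset.sum_congr rfl fun t _ => by ring
    push_cast
    calc ∑ j ∈ range (a + 1), (-1 : ℂ) ^ (a - j) * (a.choose j) * ((j : ℂ) + 1) ^ s
        = ∑ j ∈ range (a + 1), ∑ t ∈ range (s + 1),
            (s.choose t : ℂ) * ((-1 : ℂ) ^ (a - j) * (a.choose j) * (j : ℂ) ^ t) := by
          refine Finset.sum_congr rfl fun j _ => ?_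
          rw [hexp, Finset.mul_sum]
          refine Finset.sum_congr rfl fun t _ => by ring
      _ = ∑ t ∈ range (s + 1), (s.choose t : ℂ) * Dsum a t := by
          rw [Finset.sum_comm]
          refine Finset.sum_congr rfl fun t _ => ?_
          rw [Dsum, Finset.mul_sum]
  rw [hsplit, hA, hB, Finset.sum_range_succ, Nat.choose_self]
  push_cast
  ring

lemma Dsum_spec (a : ℕ) : ∀ s : ℕ, (s < a → Dsum a s = 0) ∧ Dsum a a = (a.factorial : ℂ) := by
  induction a with
  | zero =>
    intro s
    constructor
    · omega
    · simp [Dsum]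
  | succ a ih =>
    intro s
    constructor
    · intro hsa
      rcases Nat.eq_zero_or_pos s with hs | hs
      · subst hs
        rw [Dsum_zero_right, zero_pow (by omega)]
      · rw [Dsum_rec a s hs]
        refine Finset.sum_eq_zero fun t ht => ?_
        rw [(ih t).1 (by have := Finset.mem_range.mp ht; omega), mul_zero]
    · rw [Dsum_rec a (a + 1) (by omega), Finset.sum_range_succ]
      have h1 : ∑ t ∈ range a, ((a + 1).choose t : ℂ) * Dsum a t = 0 := by
        refine Finset.sum_eq_zero fun t ht => ?_
        rw [(ih t).1 (Finset.mem_range.mp ht), mul_zero]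
      rw [h1, zero_add, (ih a).2, Nat.choose_succ_self_right, Nat.factorial_succ]
      push_cast
      ring

theorem weight_state_border_rank_limit (a L : ℕ) (hL : 1 ≤ L) :
    Tendsto
      (fun ε : ℂ => (fun i : Fin L → Fin (a + 1) =>
        ((a.factorial : ℂ))⁻¹ * (ε ^ a)⁻¹ *
          ∑ j ∈ Finset.range (a + 1),
            (-1 : ℂ) ^ (a - j) * (a.choose j) * ∏ k, ((j : ℂ) * ε) ^ ((i k : ℕ))))
      (nhdsWithin 0 {0}ᶜ)
      (nhds (fun i : Fin L → Fin (a + 1) =>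
        if (∑ k, ((i k : ℕ))) = a then (1 : ℂ) else 0)) := by
  rw [tendsto_pi_nhds]
  intro i
  set s : ℕ := ∑ k, ((i k : ℕ)) with hs
  have hfac : (a.factorial : ℂ) ≠ 0 := by
    exact_mod_cast a.factorial_ne_zero
  have key : ∀ ε : ℂ,
      ((a.factorial : ℂ))⁻¹ * (ε ^ a)⁻¹ *
          ∑ j ∈ Finset.range (a + 1),
            (-1 : ℂ) ^ (a - j) * (a.choose j) * ∏ k, ((j : ℂ) * ε) ^ ((i k : ℕ))
        = ((a.factorial : ℂ))⁻¹ * (ε ^ a)⁻¹ * (Dsum a s * ε ^ s) := by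
    intro ε
    congr 1
    rw [Dsum, Finset.sum_mul]
    refine Finset.sum_congr rfl fun j _ => ?_
    rw [Finset.prod_pow_eq_pow_sum, ← hs, mul_pow]
    ring
  simp only [key]
  rcases lt_trichotomy s a with h | h | h
  · have hD : Dsum a s = 0 := (Dsum_spec a s).1 h
    rw [if_neg (by omega)]
    simp only [hD, zero_mul, mul_zero]
    exact tendsto_const_nhds
  · rw [if_pos h]
    have hD : Dsum a s = (a.factorial : ℂ) := by rw [h]; exact (Dsum_spec a a).2
    refine Tendsto.congr' ?_ (tendsto_const_nhds (x := (1 : ℂ)))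
    filter_upwards [self_mem_nhdsWithin] with ε hε
    have hεne : ε ≠ 0 := hε
    have hpow : ε ^ a ≠ 0 := pow_ne_zero _ hεne
    rw [hD, h]
    field_simp
  · rw [if_neg (by omega)]
    have hcongr : ∀ ε : ℂ, ε ≠ 0 →
        ((a.factorial : ℂ))⁻¹ * (ε ^ a)⁻¹ * (Dsum a s * ε ^ s)
          = ((a.factorial : ℂ))⁻¹ * Dsum a s * ε ^ (s - a) := by
      intro ε hε
      have : ε ^ s = ε ^ a * ε ^ (s - a) := by
        rw [← pow_add]
        congr 1
        omega
      rw [this]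
      have hpa : ε ^ a ≠ 0 := pow_ne_zero _ hε
      field_simp
    have htend : Tendsto (fun ε : ℂ => ((a.factorial : ℂ))⁻¹ * Dsum a s * ε ^ (s - a))
        (nhdsWithin 0 {0}ᶜ) (nhds 0) := by
      have h1 : Tendsto (fun ε : ℂ => ((a.factorial : ℂ))⁻¹ * Dsum a s * ε ^ (s - a))
          (nhds 0) (nhds (((a.factorial : ℂ))⁻¹ * Dsum a s * (0 : ℂ) ^ (s - a))) := by
        exact ((continuous_pow (s - a)).tendsto 0).const_mul _
      rw [zero_pow (by omega), mul_zero] at h1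
      exact h1.mono_left nhdsWithin_le_nhds
    refine Tendsto.congr' ?_ htend
    filter_upwards [self_mem_nhdsWithin] with ε hε
    exact (hcongr ε hε).symm
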